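/- There exists a directed graph with energy costs and a single charging station such that every feasible s–t walk (battery never negative, full recharge at the station) must visit some transit vertex (a vertex that is neither the source, destination, nor a station) at least twice. -/

import Mathlib

/-- Battery feasibility with full recharges at stations of `S`. -/
def Feasible {V : Type*} (c : V → V → ℝ) (S : V → Bool) (Q : ℝ) :
    ℝ → List V → Prop
  | ε, i :: j :: rest =>
      0 ≤ ε - c i j ∧ Feasible c S Q (if S j then Q else ε - c i j) (j :: rest)
  | _, _ => True

/-- A feasible walk of the EV from `s` to `t`, starting fully charged. -/
def FeasWalk {V : Type*} (A : V → V → Prop) (c : V → V → ℝ) (S : V → Bool)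
    (Q : ℝ) (s t : V) (w : List V) : Prop :=
  w.Chain' A ∧ w.head? = some s ∧ w.getLast? = some t ∧ Feasible c S Q Q w

namespace EVwit

def A (i j : Fin 4) : Prop :=
  (i = 0 ∧ j = 1) ∨ (i = 1 ∧ j = 3) ∨ (i = 3 ∧ j = 1) ∨ (i = 1 ∧ j = 2)

instance : DecidableRel A := fun i j =>
  inferInstanceAs (Decidable ((i = 0 ∧ j = 1) ∨ (i = 1 ∧ j = 3) ∨ (i = 3 ∧ j = 1) ∨ (i = 1 ∧ j = 2)))

noncomputable def c (i j : Fin 4) : ℝ :=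
  if i = 0 ∧ j = 1 then 300
  else if i = 1 ∧ j = 3 then 100
  else if i = 3 ∧ j = 1 then 100
  else if i = 1 ∧ j = 2 then 300 else 0

def S (v : Fin 4) : Bool := v = 3

lemma c_nonneg (i j : Fin 4) : 0 ≤ c i j := by
  unfold c; split_ifs <;> norm_num

lemma c01 : c 0 1 = 300 := by unfold c; rw [if_pos ⟨rfl, rfl⟩]
lemma c13 : c 1 3 = 100 := by
  unfold c; rw [if_neg (by decide), if_pos ⟨rfl, rfl⟩]
lemma c31 : c 3 1 = 100 := by
  unfold c; rw [if_neg (by decide), if_neg (by decide), if_pos ⟨rfl, rfl⟩]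
lemma c12 : c 1 2 = 300 := by
  unfold c
  rw [if_neg (by decide), if_neg (by decide), if_neg (by decide), if_pos ⟨rfl, rfl⟩]
lemma S0 : S 0 = false := rfl
lemma S1 : S 1 = false := rfl
lemma S2 : S 2 = false := rfl
lemma S3 : S 3 = true := rfl

lemma key : ∀ (w : List (Fin 4)) (v : Fin 4) (ε : ℝ),
    ε ≤ 500 → (v :: w).Chain' A → Feasible c S 500 ε (v :: w) →
    (v :: w).getLast? = some 2 →
    ((v = 0 → 2 ≤ (v :: w).count 1) ∧
     (v = 1 → ε ≤ 200 → 2 ≤ (v :: w).count 1)) := by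
  intro w
  induction w with
  | nil =>
      intro v ε _ _ _ hlast
      simp at hlast
      subst hlast
      exact ⟨fun h => absurd h (by decide), fun h => absurd h (by decide)⟩
  | cons u rest ih =>
      intro v ε hε hchain hfeas hlast
      rw [List.Chain', List.isChain_cons_cons] at hchain
      obtain ⟨hvu, hchain'⟩ := hchain
      obtain ⟨hstep, hfeas'⟩ : 0 ≤ ε - c v u ∧
          Feasible c S 500 (if S u then 500 else ε - c v u) (u :: rest) := hfeas
      rw [List.getLast?_cons_cons] at hlast
      constructor
      · intro hv
        subst hv
        have hu : u = 1 := by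
          rcases hvu with ⟨_, h⟩ | ⟨h, _⟩ | ⟨h, _⟩ | ⟨h, _⟩
          · exact h
          · exact absurd h (by decide)
          · exact absurd h (by decide)
          · exact absurd h (by decide)
        subst hu
        rw [S1, c01] at hfeas'
        simp only [Bool.false_eq_true, if_false] at hfeas'
        have := (ih 1 (ε - 300) (by linarith) hchain' hfeas' hlast).2 rfl (by linarith)
        simpa [List.count_cons] using this
      · intro hv hε200
        subst hv
        have hu : u = 3 := by
          rcases hvu with ⟨h, _⟩ | ⟨_, h⟩ | ⟨h, _⟩ | ⟨_, h⟩
          · exact absurd h (by decide)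
          · exact h
          · exact absurd h (by decide)
          · exfalso
            subst h
            rw [c12] at hstep
            linarith
        subst hu
        cases rest with
        | nil => exact absurd hlast (by decide)
        | cons x rest' =>
            rw [List.isChain_cons_cons] at hchain'
            have hx : x = 1 := by
              rcases hchain'.1 with ⟨h, _⟩ | ⟨h, _⟩ | ⟨_, h⟩ | ⟨h, _⟩
              · exact absurd h (by decide)
              · exact absurd h (by decide)
              · exact h
              · exact absurd h (by decide)
            subst hx
            simp [List.count_cons]

end EVwit

theorem stmt_5 :
    ∃ (n : ℕ) (A : Fin n → Fin n → Prop) (c : Fin n → Fin n → ℝ)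
      (S : Fin n → Bool) (Q : ℝ) (s t : Fin n),
      (∀ i j, 0 ≤ c i j) ∧
      (∃ w, FeasWalk A c S Q s t w) ∧
      (∀ w, FeasWalk A c S Q s t w →
        ∃ v, S v = false ∧ v ≠ s ∧ v ≠ t ∧ 2 ≤ w.count v) := by
  refine ⟨4, EVwit.A, EVwit.c, EVwit.S, 500, 0, 2, EVwit.c_nonneg,
    ⟨[0, 1, 3, 1, 2], ?_, rfl, rfl, ?_⟩, ?_⟩
  · norm_num [List.Chain', List.isChain_cons_cons, EVwit.A]
  · show Feasible _ _ _ _ _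
    simp only [Feasible, EVwit.c01, EVwit.c13, EVwit.c31, EVwit.c12,
      EVwit.S1, EVwit.S2, EVwit.S3, Bool.false_eq_true, if_true, if_false]
    norm_num
  · rintro w ⟨hchain, hhead, hlast, hfeas⟩
    cases w with
    | nil => simp at hhead
    | cons v w' =>
        have hv : v = 0 := by simpa using hhead
        subst hv
        refine ⟨1, by decide, by decide, by decide, ?_⟩
        exact (EVwit.key w' 0 500 le_rfl hchain hfeas hlast).1 rfl
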